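/- The balancing chain of a normed semistable polarised state terminates: if Ξ = (M, Ξ, α) is a normed semistable polarised state that is not polystable and α ≠ 0, then the state Ξ' obtained by slicing satisfies #(Ξ') < #(Ξ), where #(−) denotes the cardinality of the underlying finite state set. Consequently, the sequence of states in the balancing chain of any normed semistable polarised state is eventually constant with trivial balanced filtration. -/

import Mathlib

/-- The cone generated by a subset `S` of a `ℚ`-vector space. -/
def qCone {V : Type*} [AddCommGroup V] [Module ℚ V] (S : Set V) : Set V :=
  {x | ∃ (t : Finset V) (c : V → ℚ), (↑t : Set V) ⊆ S ∧ (∀ v, 0 ≤ c v) ∧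
    x = ∑ v ∈ t, c v • v}

/-- `F` is a face of `C`: it is cut out on `C` by a linear form nonnegative on `C`. -/
def IsFaceOf {V : Type*} [AddCommGroup V] [Module ℚ V] (C F : Set V) : Prop :=
  ∃ μ : V →ₗ[ℚ] ℚ, (∀ x ∈ C, 0 ≤ μ x) ∧ F = C ∩ {x | μ x = 0}

/-- Termination of the balancing chain of a normed semistable polarised state:
if `α ≠ 0` and the state is not polystable (the smallest face `F` of `cone Ξ`
containing `α` is not the whole cone), then the state set `q(Ξ \ F)` of the
slice (where `q` is the quotient by the span `K` of `F ∩ Ξ`) has strictly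
fewer elements than `Ξ`. Consequently (since the cardinalities of the state
sets along the balancing chain are weakly decreasing natural numbers) the
sequence of states in the balancing chain is eventually constant. -/
theorem stmt10 {V : Type*} [AddCommGroup V] [Module ℚ V] [FiniteDimensional ℚ V]
    (Ξ : Finset V) (hΞ0 : (0 : V) ∉ Ξ) (α : V)
    (hα : α ∈ qCone (↑Ξ : Set V)) (hα0 : α ≠ 0) (F : Set V)
    (hF : IsFaceOf (qCone (↑Ξ : Set V)) F) (hαF : α ∈ F)
    (hmin : ∀ F', IsFaceOf (qCone (↑Ξ : Set V)) F' → α ∈ F' → F ⊆ F')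
    (hnps : F ≠ qCone (↑Ξ : Set V)) :
    (⇑(Submodule.span ℚ (F ∩ (↑Ξ : Set V))).mkQ '' ((↑Ξ : Set V) \ F)).ncard
        < Ξ.card ∧
      ∀ g : ℕ → ℕ, (∀ n, g (n + 1) ≤ g n) → ∃ N, ∀ n ≥ N, g n = g N := by
  classical
  constructor
  · -- find an element of Ξ lying in F
    obtain ⟨μ, hμ0, hFeq⟩ := hF
    obtain ⟨t, c, htΞ, hc, hsum⟩ := hα
    have hμα : μ α = 0 := by
      have := hαF
      rw [hFeq] at this
      exact this.2
    have hterm : ∀ v ∈ t, 0 ≤ c v * μ v := by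
      intro v hv
      have hvΞ : v ∈ qCone (↑Ξ : Set V) := by
        refine ⟨{v}, fun w => if w = v then 1 else 0, ?_, ?_, ?_⟩
        · simpa using htΞ hv
        · intro w; by_cases h : w = v <;> simp [h]
        · simp
      exact mul_nonneg (hc v) (hμ0 v hvΞ)
    have hsum0 : ∑ v ∈ t, c v * μ v = 0 := by
      have : μ α = ∑ v ∈ t, c v * μ v := by
        rw [hsum, map_sum]
        simp [smul_eq_mul]
      rw [← this, hμα]
    have hzero : ∀ v ∈ t, c v * μ v = 0 :=
      (Finset.sum_eq_zero_iff_of_nonneg hterm).mp hsum0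
    -- since α ≠ 0, some c v ≠ 0
    have hex : ∃ v ∈ t, c v ≠ 0 := by
      by_contra h
      push_neg at h
      apply hα0
      rw [hsum]
      exact Finset.sum_eq_zero fun v hv => by rw [h v hv, zero_smul]
    obtain ⟨v, hvt, hcv⟩ := hex
    have hvΞ : v ∈ Ξ := htΞ hvt
    have hμv : μ v = 0 := by
      have := hzero v hvt
      exact (mul_eq_zero.mp this).resolve_left hcv
    have hvF : v ∈ F := by
      rw [hFeq]
      refine ⟨⟨{v}, fun w => if w = v then 1 else 0, ?_, ?_, ?_⟩, hμv⟩
      · simpa using hvΞ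
      · intro w; by_cases h : w = v <;> simp [h]
      · simp
    -- now the cardinality argument
    have hfin : ((↑Ξ : Set V) \ F).Finite := Ξ.finite_toSet.diff
    have h1 : (⇑(Submodule.span ℚ (F ∩ (↑Ξ : Set V))).mkQ '' ((↑Ξ : Set V) \ F)).ncard
        ≤ ((↑Ξ : Set V) \ F).ncard := Set.ncard_image_le hfin
    have h2 : ((↑Ξ : Set V) \ F).ncard < (↑Ξ : Set V).ncard := by
      apply Set.ncard_lt_ncard _ Ξ.finite_toSet
      constructor
      · exact Set.diff_subset
      · intro hsub
        exact (hsub hvΞ).2 hvF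
    calc _ ≤ ((↑Ξ : Set V) \ F).ncard := h1
      _ < (↑Ξ : Set V).ncard := h2
      _ = Ξ.card := Set.ncard_coe_finset Ξ
  · intro g hg
    have hanti : Antitone g := antitone_nat_of_succ_le hg
    have hmem : sInf (Set.range g) ∈ Set.range g :=
      Nat.sInf_mem ⟨g 0, Set.mem_range_self 0⟩
    obtain ⟨N, hN⟩ := hmem
    refine ⟨N, fun n hn => le_antisymm (hanti hn) ?_⟩
    rw [hN]
    exact Nat.sInf_le (Set.mem_range_self n)
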